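/- Define ρ : R̃_{2n+1} → R̃_{2n+1} by ρ(Hu) = H c u where c is the diagonal sign matrix diag(−1,…,−1, 1, …, 1) with −1 in the first n+1 positions and +1 elsewhere if n is odd, and with +1 in position 1, −1 in positions 2,…,n+1, and +1 elsewhere if n is even. Then ρ is a well-defined good involution on R̃_{2n+1}: ρ² = id, ρ(Hu ◁ Hv) = ρ(Hu) ◁ Hv, and Hu ◁ ρ(Hv) is the inverse of the right action of Hv (i.e. (Hu ◁ ρ(Hv)) ◁ Hv = Hu). -/

import Mathlib

/-- The signed permutation matrix `a = (1, 2n+1, 2n, …, n+2, −(n+1), …, −3, −2)`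
(column `j` is `ε_j e_{σ(j)}`), written with 0-based indices. -/
def Amat (n : ℕ) : Matrix (Fin (2*n+1)) (Fin (2*n+1)) ℤ := fun i j =>
  if (j : ℕ) = 0 then (if (i : ℕ) = 0 then 1 else 0)
  else if (i : ℕ) = 2*n+1 - (j : ℕ) then (if (j : ℕ) ≤ n then 1 else -1) else 0

/-- The cyclic permutation matrix `b = (2n+1, 1, 2, …, 2n)`, with 0-based indices:
column `j` is `e_{j-1 (mod 2n+1)}`. -/
def Bmat (n : ℕ) : Matrix (Fin (2*n+1)) (Fin (2*n+1)) ℤ := fun i j =>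
  if i = j - 1 then 1 else 0

/-- The diagonal sign matrix defining the good involution `ρ` on `R̃_{2n+1}`:
`diag(−1,…,−1 (first n+1 entries), 1,…,1)` for odd `n`, and
`diag(1, −1,…,−1 (entries 2,…,n+1), 1,…,1)` for even `n` (0-based indices). -/
def Cmat (n : ℕ) : Matrix (Fin (2*n+1)) (Fin (2*n+1)) ℤ := fun i j =>
  if i = j then (if (i : ℕ) ≤ n ∧ (Odd n ∨ (i : ℕ) ≠ 0) then -1 else 1) else 0


private def dvec (n : ℕ) (i : Fin (2*n+1)) : ℤ :=
  if (i:ℕ) ≤ n ∧ (Odd n ∨ (i:ℕ) ≠ 0) then -1 else 1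

private lemma cmat_eq_diagonal (n : ℕ) : Cmat n = Matrix.diagonal (dvec n) := by
  ext i j
  by_cases h : i = j <;> simp [Cmat, Matrix.diagonal_apply, dvec, h]

private lemma dvec_sq (n : ℕ) (i : Fin (2*n+1)) : dvec n i * dvec n i = 1 := by
  unfold dvec; split <;> norm_num

private lemma hCC (n : ℕ) : Cmat n * Cmat n = 1 := by
  rw [cmat_eq_diagonal, Matrix.diagonal_mul_diagonal]
  have h : (fun i => dvec n i * dvec n i) = fun _ : Fin (2*n+1) => (1:ℤ) :=
    funext (dvec_sq n)
  rw [h, Matrix.diagonal_one]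

private lemma hCACA (n : ℕ) : Cmat n * Amat n * Cmat n * Amat n = 1 := by
  rw [cmat_eq_diagonal]
  ext i k
  rw [Matrix.mul_apply]
  have hDAD : ∀ i j, (Matrix.diagonal (dvec n) * Amat n * Matrix.diagonal (dvec n)) i j
      = dvec n i * Amat n i j * dvec n j := by
    intro i j
    rw [Matrix.mul_diagonal, Matrix.diagonal_mul]
  simp only [hDAD]
  by_cases hk : (k:ℕ) = 0
  · have hk0 : k = 0 := by
      apply Fin.ext; simpa using hk
    rw [Finset.sum_eq_single (0 : Fin (2*n+1))]
    · by_cases hi : (i:ℕ) = 0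
      · have hi0 : i = 0 := by apply Fin.ext; simpa using hi
        simp [Amat, hi0, hk0, Matrix.one_apply, dvec_sq]
      · have : i ≠ 0 := by intro h; apply hi; rw [h]; simp
        simp [Amat, hk0, hi, Matrix.one_apply, this]
    · intro j _ hj
      have : (j:ℕ) ≠ 0 := by
        intro h; apply hj; apply Fin.ext; simpa using h
      simp [Amat, hk, this]
    · simp
  · have hklt : (k:ℕ) < 2*n+1 := k.isLt
    set j0 : Fin (2*n+1) := ⟨2*n+1 - (k:ℕ), by omega⟩ with hj0
    have hj0v : (j0:ℕ) = 2*n+1 - (k:ℕ) := rfl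
    have hj0ne : (j0:ℕ) ≠ 0 := by omega
    rw [Finset.sum_eq_single j0]
    · have hAj0k : Amat n j0 k = if (k:ℕ) ≤ n then 1 else -1 := by
        simp [Amat, hk, hj0v]
      have hsub : 2*n+1 - (j0:ℕ) = (k:ℕ) := by omega
      have hAij0 : Amat n i j0 = if (i:ℕ) = (k:ℕ) then (if (j0:ℕ) ≤ n then 1 else -1) else 0 := by
        simp [Amat, hj0ne, hsub]
      by_cases hik : (i:ℕ) = (k:ℕ)
      · have hik' : i = k := Fin.ext hik
        have hine : (i:ℕ) ≠ 0 := by omega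
        rw [hAj0k, hAij0]
        simp only [hik, if_pos rfl, Matrix.one_apply, hik']
        unfold dvec
        by_cases hkn : (k:ℕ) ≤ n
        · have h2 : ¬ (2*n+1 - (k:ℕ) ≤ n) := by omega
          have ho : Odd n ∨ ¬ (k:ℕ) = 0 := Or.inr hk
          have hkF : ¬ k = 0 := fun h => hk (by rw [h]; rfl)
          simp [hkn, hine, hik, hj0v, h2, ho, hkF]
        · have h2 : 2*n+1 - (k:ℕ) ≤ n := by omega
          have ho : Odd n ∨ ¬ (2*n+1-(k:ℕ)) = 0 := Or.inr (by omega)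
          simp [hkn, hine, hik, hj0v, h2, hj0ne, ho]
      · have : i ≠ k := fun h => hik (by rw [h])
        rw [hAij0]
        simp [hik, Matrix.one_apply, this]
    · intro j _ hj
      have : (j:ℕ) ≠ 2*n+1 - (k:ℕ) := by
        intro h; apply hj; apply Fin.ext; rw [h, hj0v]
      simp [Amat, hk, this]
    · simp

/-- The group `G_{2n+1}` generated by `a` and `b`. -/
def Gp (n : ℕ) (a b : Matrix.SpecialLinearGroup (Fin (2*n+1)) ℤ) :
    Subgroup (Matrix.SpecialLinearGroup (Fin (2*n+1)) ℤ) :=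
  Subgroup.closure {a, b}

theorem mem_a (n : ℕ) (a b : Matrix.SpecialLinearGroup (Fin (2*n+1)) ℤ) : a ∈ Gp n a b :=
  Subgroup.subset_closure (Set.mem_insert _ _)

/-- The subgroup `H = C(a)` of `G_{2n+1}`. -/
def Hc (n : ℕ) (a b : Matrix.SpecialLinearGroup (Fin (2*n+1)) ℤ) : Subgroup ↥(Gp n a b) :=
  (Subgroup.centralizer {a}).subgroupOf (Gp n a b)

/-- `ρ(Hu) = H c u` is a well-defined good involution on the coset quandle
`R̃_{2n+1} = (G_{2n+1}, C(a), a)` with operation `Hu ◁ Hv = H u v⁻¹ a v`: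
`ρ² = id`, `ρ(Hu ◁ Hv) = ρ(Hu) ◁ Hv`, and `(Hu ◁ ρ(Hv)) ◁ Hv = Hu`. -/
theorem good_involution_tilde_R (n : ℕ) (hn : 0 < n)
    (a b : Matrix.SpecialLinearGroup (Fin (2*n+1)) ℤ)
    (ha : (a : Matrix (Fin (2*n+1)) (Fin (2*n+1)) ℤ) = Amat n)
    (hb : (b : Matrix (Fin (2*n+1)) (Fin (2*n+1)) ℤ) = Bmat n)
    (c : ↥(Gp n a b))
    (hc : ((c : Matrix.SpecialLinearGroup (Fin (2*n+1)) ℤ) :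
      Matrix (Fin (2*n+1)) (Fin (2*n+1)) ℤ) = Cmat n) :
    ∃ ρ : Quotient (QuotientGroup.rightRel (Hc n a b)) →
        Quotient (QuotientGroup.rightRel (Hc n a b)),
      (∀ u : ↥(Gp n a b),
        ρ (Quotient.mk (QuotientGroup.rightRel (Hc n a b)) u)
          = Quotient.mk (QuotientGroup.rightRel (Hc n a b)) (c * u)) ∧
      ρ ∘ ρ = id ∧
      (∀ u v : ↥(Gp n a b),
        ρ (Quotient.mk (QuotientGroup.rightRel (Hc n a b))
            (u * v⁻¹ * ⟨a, mem_a n a b⟩ * v))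
          = Quotient.mk (QuotientGroup.rightRel (Hc n a b))
            ((c * u) * v⁻¹ * ⟨a, mem_a n a b⟩ * v)) ∧
      (∀ u v : ↥(Gp n a b),
        Quotient.mk (QuotientGroup.rightRel (Hc n a b))
            ((u * (c * v)⁻¹ * ⟨a, mem_a n a b⟩ * (c * v)) * v⁻¹ * ⟨a, mem_a n a b⟩ * v)
          = Quotient.mk (QuotientGroup.rightRel (Hc n a b)) u) := by
  set aG : ↥(Gp n a b) := ⟨a, mem_a n a b⟩ with haG
  have hC2 : c * c = 1 := by
    refine Subtype.ext (Subtype.ext ?_)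
    simp only [Subgroup.coe_mul, OneMemClass.coe_one, Matrix.SpecialLinearGroup.coe_mul,
      Matrix.SpecialLinearGroup.coe_one, hc]
    exact hCC n
  have hCA : c * aG * c * aG = 1 := by
    refine Subtype.ext (Subtype.ext ?_)
    simp only [Subgroup.coe_mul, OneMemClass.coe_one, Matrix.SpecialLinearGroup.coe_mul,
      Matrix.SpecialLinearGroup.coe_one, hc, haG]
    rw [ha]
    exact hCACA n
  have hmem : ∀ x : ↥(Gp n a b), x ∈ Hc n a b ↔ aG * x = x * aG := by
    intro x
    rw [Hc, Subgroup.mem_subgroupOf, Subgroup.mem_centralizer_iff]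
    simp only [Set.mem_singleton_iff, forall_eq]
    constructor
    · intro h; exact Subtype.ext h
    · intro h; exact congrArg Subtype.val h
  have hinv : c⁻¹ = c := inv_eq_of_mul_eq_one_right hC2
  have hacc : c * aG * c = aG⁻¹ := eq_inv_of_mul_eq_one_left hCA
  have hac : aG * c = c * aG⁻¹ := by rw [← hacc]; simp [← mul_assoc, hC2]
  have hia : aG⁻¹ * c = c * aG := by rw [← hacc, mul_assoc, hC2, mul_one]
  have comm : ∀ w : ↥(Gp n a b), aG * w = w * aG → aG * (c*w*c) = (c*w*c) * aG := by
    intro w hw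
    have hw' : aG⁻¹ * w = w * aG⁻¹ := ((show Commute aG w from hw).inv_left).eq
    calc aG * (c*w*c) = (aG * c) * w * c := by simp [mul_assoc]
      _ = (c * aG⁻¹) * w * c := by rw [hac]
      _ = c * (aG⁻¹ * w) * c := by simp [mul_assoc]
      _ = c * (w * aG⁻¹) * c := by rw [hw']
      _ = (c * w) * (aG⁻¹ * c) := by simp [mul_assoc]
      _ = (c * w) * (c * aG) := by rw [hia]
      _ = (c*w*c) * aG := by simp [mul_assoc]
  have wd : ∀ u v : ↥(Gp n a b),
      (QuotientGroup.rightRel (Hc n a b)).r u v →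
      (QuotientGroup.rightRel (Hc n a b)).r (c * u) (c * v) := by
    intro u v h
    rw [QuotientGroup.rightRel_apply] at h ⊢
    have hrw : (c * v) * (c * u)⁻¹ = c * (v * u⁻¹) * c := by
      rw [mul_inv_rev, hinv]
      simp [mul_assoc]
    rw [hrw, hmem]
    exact comm _ ((hmem _).mp h)
  have hfix : ∀ x : ↥(Gp n a b), c * (aG * (c * (aG * x))) = x := by
    intro x
    have h : (c * aG * c * aG) * x = 1 * x := by rw [hCA]
    rw [one_mul] at h
    calc c * (aG * (c * (aG * x))) = (c * aG * c * aG) * x := by simp [mul_assoc]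
      _ = x := h
  refine ⟨Quotient.lift (fun u => Quotient.mk (QuotientGroup.rightRel (Hc n a b)) (c * u))
      (fun u v h => Quotient.sound (wd u v h)), fun u => rfl, ?_, ?_, ?_⟩
  · funext q
    induction q using Quotient.ind with
    | _ u =>
      show Quotient.mk (QuotientGroup.rightRel (Hc n a b)) (c * (c * u))
        = Quotient.mk (QuotientGroup.rightRel (Hc n a b)) u
      rw [← mul_assoc, hC2, one_mul]
  · intro u v
    show Quotient.mk (QuotientGroup.rightRel (Hc n a b)) (c * (u * v⁻¹ * aG * v))
      = Quotient.mk (QuotientGroup.rightRel (Hc n a b)) ((c * u) * v⁻¹ * aG * v)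
    have he : c * (u * v⁻¹ * aG * v) = (c * u) * v⁻¹ * aG * v := by
      simp [mul_assoc]
    rw [he]
  · intro u v
    have hrw : (c * v)⁻¹ = v⁻¹ * c := by rw [mul_inv_rev, hinv]
    have he : (u * (c * v)⁻¹ * aG * (c * v)) * v⁻¹ * aG * v = u := by
      rw [hrw]
      calc u * (v⁻¹ * c) * aG * (c * v) * v⁻¹ * aG * v
          = u * (v⁻¹ * (c * (aG * (c * (aG * v))))) := by
            simp only [mul_assoc, mul_inv_cancel_left, inv_mul_cancel_left]
        _ = u * (v⁻¹ * v) := by rw [hfix]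
        _ = u := by rw [inv_mul_cancel, mul_one]
    rw [he]
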